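/- Let S be a set of 6n points in ℝ² (n ≥ 1), consisting of exactly 2n red, 2n green, and 2n blue points, in general position (no three points of S are collinear) and with pairwise distinct x-coordinates and pairwise distinct y-coordinates. Then there exists a double wedge containing exactly n points of each color: there exist real numbers m₁, c₁, m₂, c₂ with m₁ ≠ m₂ such that for each color, exactly n points (x, y) of S of that color satisfy (y − m₁x − c₁)(y − m₂x − c₂) < 0. -/

import Mathlib

open Finset

namespace DW

/-- hexagonal sector of a nonzero integer vector `(a,b)` (third coord `-a-b`) -/
def sec (a b : ℤ) : ℤ :=
  if 0 < a ∧ b < 0 ∧ 0 ≤ a + b then 0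
  else if 0 < a ∧ 0 ≤ b then 1
  else if a ≤ 0 ∧ 0 < b ∧ 0 < a + b then 2
  else if a < 0 ∧ 0 < b ∧ a + b ≤ 0 then 3
  else if a < 0 ∧ b ≤ 0 then 4
  else 5

def Dpred (x y x' y' : ℤ) : Prop :=
  (x' - x = 0 ∧ y' - y = 0) ∨ (x' - x = 1 ∧ y' - y = -1) ∨ (x' - x = -1 ∧ y' - y = 1) ∨
  (x' - x = 1 ∧ y' - y = 0) ∨ (x' - x = -1 ∧ y' - y = 0) ∨ (x' - x = 0 ∧ y' - y = 1) ∨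
  (x' - x = 0 ∧ y' - y = -1)

lemma sec_range (a b : ℤ) : 0 ≤ sec a b ∧ sec a b ≤ 5 := by
  unfold sec; split_ifs <;> omega

lemma sec_antipode (a b : ℤ) (h : ¬(a = 0 ∧ b = 0)) :
    sec (-a) (-b) % 6 = (sec a b + 3) % 6 := by
  unfold sec; split_ifs <;> omega

lemma sec_jump (a b a' b' : ℤ) (h1 : ¬(a = 0 ∧ b = 0)) (h2 : ¬(a' = 0 ∧ b' = 0))
    (hD : Dpred a b a' b') :
    (sec a' b' - sec a b) % 6 = 0 ∨ (sec a' b' - sec a b) % 6 = 1 ∨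
      (sec a' b' - sec a b) % 6 = 5 := by
  unfold Dpred at hD
  unfold sec; split_ifs <;> omega

def dlt (a b a' b' : ℤ) : ℤ := (sec a' b' - sec a b + 1) % 6 - 1

lemma dlt_congr (a b a' b' : ℤ) : (dlt a b a' b' - (sec a' b' - sec a b)) % 6 = 0 := by
  unfold dlt; omega

lemma dlt_bound (a b a' b' : ℤ) (h1 : ¬(a = 0 ∧ b = 0)) (h2 : ¬(a' = 0 ∧ b' = 0))
    (hD : Dpred a b a' b') : -1 ≤ dlt a b a' b' ∧ dlt a b a' b' ≤ 1 := by
  have := sec_jump a b a' b' h1 h2 hD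
  unfold dlt; omega

lemma dlt_antisymm (a b a' b' : ℤ) (h1 : ¬(a = 0 ∧ b = 0)) (h2 : ¬(a' = 0 ∧ b' = 0))
    (hD : Dpred a b a' b') (hD' : Dpred a' b' a b) :
    dlt a' b' a b = - dlt a b a' b' := by
  have u1 := dlt_bound a b a' b' h1 h2 hD
  have u2 := dlt_bound a' b' a b h2 h1 hD'
  have c1 := dlt_congr a b a' b'
  have c2 := dlt_congr a' b' a b
  omega

variable {n : ℕ}

def cnt (n : ℕ) (w : ℕ → Fin 3) (k : ℕ) (c : Fin 3) : ℕ :=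
  ((Finset.Ico k (k + 3 * n)).filter (fun j => w j = c)).card

def vr (n : ℕ) (w : ℕ → Fin 3) (k : ℕ) : ℤ := (cnt n w k 0 : ℤ) - n
def vg (n : ℕ) (w : ℕ → Fin 3) (k : ℕ) : ℤ := (cnt n w k 1 : ℤ) - n

def NZ (n : ℕ) (w : ℕ → Fin 3) (k : ℕ) : Prop := ¬ (vr n w k = 0 ∧ vg n w k = 0)

lemma fin3 (c : Fin 3) : c = 0 ∨ c = 1 ∨ c = 2 := by fin_cases c <;> simp

lemma cnt_succ (hn : 1 ≤ n) (w : ℕ → Fin 3) (k : ℕ) (c : Fin 3) :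
    (cnt n w (k+1) c : ℤ)
      = (cnt n w k c : ℤ) - (if w k = c then 1 else 0) + (if w (k + 3*n) = c then 1 else 0) := by
  have e1 : k + 1 + 3 * n = (k + 3 * n) + 1 := by omega
  unfold cnt
  rw [Finset.card_filter, Finset.card_filter, e1,
    Finset.sum_Ico_succ_top (by omega : k + 1 ≤ k + 3*n),
    Finset.sum_eq_sum_Ico_succ_bot (by omega : k < k + 3*n)]
  push_cast
  ring

lemma step_D (hn : 1 ≤ n) (w : ℕ → Fin 3) (k : ℕ) :
    Dpred (vr n w k) (vg n w k) (vr n w (k+1)) (vg n w (k+1)) := by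
  have h0 := cnt_succ hn w k 0
  have h1 := cnt_succ hn w k 1
  unfold Dpred vr vg
  rcases fin3 (w k) with hk | hk | hk <;> rcases fin3 (w (k + 3*n)) with hm | hm | hm <;>
    simp [hk, hm] at h0 h1 <;> omega

/-- path sum -/
def F (n : ℕ) (w : ℕ → Fin 3) : ℤ :=
  ∑ k ∈ Finset.range (3 * n),
    dlt (vr n w k) (vg n w k) (vr n w (k+1)) (vg n w (k+1))

lemma F_telescope (w : ℕ → Fin 3) (K : ℕ) :
    ((∑ k ∈ Finset.range K, dlt (vr n w k) (vg n w k) (vr n w (k+1)) (vg n w (k+1)))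
      - (sec (vr n w K) (vg n w K) - sec (vr n w 0) (vg n w 0))) % 6 = 0 := by
  induction K with
  | zero => simp
  | succ K ih =>
      rw [Finset.sum_range_succ]
      have := dlt_congr (vr n w K) (vg n w K) (vr n w (K+1)) (vg n w (K+1))
      omega

def bal (n : ℕ) (w : ℕ → Fin 3) : Prop :=
  ∀ c : Fin 3, ((Finset.range (6*n)).filter (fun j => w j = c)).card = 2*n

lemma window_total (hn : 1 ≤ n) (w : ℕ → Fin 3) (k : ℕ) :
    (cnt n w k 0) + (cnt n w k 1) + (cnt n w k 2) = 3 * n := by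
  have h : ∀ x ∈ Finset.Ico k (k + 3*n), w x ∈ (Finset.univ : Finset (Fin 3)) :=
    fun x _ => Finset.mem_univ _
  have := Finset.card_eq_sum_card_fiberwise h
  rw [Fin.sum_univ_three] at this
  unfold cnt
  simpa [Nat.card_Ico] using this.symm

lemma bal_antipode (hn : 1 ≤ n) (w : ℕ → Fin 3) (hb : bal n w) (c : Fin 3) :
    cnt n w 0 c + cnt n w (3*n) c = 2 * n := by
  have e1 : (3:ℕ)*n + 3*n = 6*n := by omega
  have hd : Disjoint (Finset.Ico 0 (3*n)) (Finset.Ico (3*n) (6*n)) :=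
    Finset.Ico_disjoint_Ico_consecutive 0 (3*n) (6*n)
  have hu : Finset.Ico 0 (3*n) ∪ Finset.Ico (3*n) (6*n) = Finset.range (6*n) := by
    rw [Finset.Ico_union_Ico_eq_Ico (by omega) (by omega), Finset.range_eq_Ico]
  have := hb c
  rw [← hu, Finset.filter_union, Finset.card_union_of_disjoint
    (Finset.disjoint_filter_filter hd)] at this
  unfold cnt
  rw [e1]
  simpa using this

lemma V_antipode (hn : 1 ≤ n) (w : ℕ → Fin 3) (hb : bal n w) :
    vr n w (3*n) = - vr n w 0 ∧ vg n w (3*n) = - vg n w 0 := by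
  have h0 := bal_antipode hn w hb 0
  have h1 := bal_antipode hn w hb 1
  unfold vr vg
  omega

lemma F_mod3 (hn : 1 ≤ n) (w : ℕ → Fin 3) (hb : bal n w) (h0 : NZ n w 0) :
    F n w % 6 = 3 := by
  have ht := F_telescope (n := n) w (3*n)
  have ha := V_antipode hn w hb
  have hap : sec (vr n w (3*n)) (vg n w (3*n)) % 6 = (sec (vr n w 0) (vg n w 0) + 3) % 6 := by
    rw [ha.1, ha.2]; exact sec_antipode _ _ h0
  have h5 := sec_range (vr n w 0) (vg n w 0)
  have h6 := sec_range (vr n w (3*n)) (vg n w (3*n))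
  unfold F at *
  omega

def sw (j : ℕ) (i : ℕ) : ℕ := if i = j then j+1 else if i = j+1 then j else i

lemma cnt_sw (w : ℕ → Fin 3) (j k : ℕ) (c : Fin 3)
    (hcond : (j ∈ Finset.Ico k (k + 3*n)) ↔ (j+1 ∈ Finset.Ico k (k + 3*n))) :
    cnt n (fun i => w (sw j i)) k c = cnt n w k c := by
  unfold cnt
  rw [Finset.card_filter, Finset.card_filter]
  by_cases hj : j ∈ Finset.Ico k (k + 3*n)
  · have hj1 : j + 1 ∈ Finset.Ico k (k + 3*n) := hcond.mp hj
    refine Finset.sum_nbij' (i := sw j) (j := sw j) ?_ ?_ ?_ ?_ ?_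
    · intro a ha
      unfold sw; split_ifs with h1 h2
      · exact hj1
      · exact hj
      · exact ha
    · intro a ha
      unfold sw; split_ifs with h1 h2
      · exact hj1
      · exact hj
      · exact ha
    · intro a _; unfold sw; split_ifs <;> omega
    · intro a _; unfold sw; split_ifs <;> omega
    · intro a _; rfl
  · have hj1 : j + 1 ∉ Finset.Ico k (k + 3*n) := fun h => hj (hcond.mpr h)
    apply Finset.sum_congr rfl
    intro a ha
    have h1 : a ≠ j := fun h => hj (h ▸ ha)
    have h2 : a ≠ j + 1 := fun h => hj1 (h ▸ ha)
    simp [sw, h1, h2]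

lemma V_sw (w : ℕ → Fin 3) (j k : ℕ) (h1 : k ≠ j+1) (h2 : k + 3*n ≠ j+1) :
    vr n (fun i => w (sw j i)) k = vr n w k ∧ vg n (fun i => w (sw j i)) k = vg n w k := by
  have hcond : (j ∈ Finset.Ico k (k + 3*n)) ↔ (j+1 ∈ Finset.Ico k (k + 3*n)) := by
    simp only [Finset.mem_Ico]; omega
  unfold vr vg
  rw [cnt_sw w j k 0 hcond, cnt_sw w j k 1 hcond]
  exact ⟨rfl, rfl⟩

def trm (n : ℕ) (w : ℕ → Fin 3) (k : ℕ) : ℤ :=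
  dlt (vr n w k) (vg n w k) (vr n w (k+1)) (vg n w (k+1))

lemma F_eq_sum_trm (w : ℕ → Fin 3) : F n w = ∑ k ∈ Finset.range (3*n), trm n w k := rfl

lemma trm_bound (hn : 1 ≤ n) (w : ℕ → Fin 3) (k : ℕ) (h1 : NZ n w k) (h2 : NZ n w (k+1)) :
    -1 ≤ trm n w k ∧ trm n w k ≤ 1 :=
  dlt_bound _ _ _ _ h1 h2 (step_D hn w k)

lemma F_close (hn : 1 ≤ n) (w W : ℕ → Fin 3) (hb : bal n w) (hB : bal n W)
    (hz : ∀ k, k ≤ 3*n → NZ n w k) (hZ : ∀ k, k ≤ 3*n → NZ n W k)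
    (x1 x2 : ℕ) (hx1 : x1 < 3*n) (hx2 : x2 < 3*n) (hx12 : x1 ≠ x2)
    (hV : ∀ k, k < 3*n → k ≠ x1 → k ≠ x2 → trm n W k = trm n w k) :
    F n W = F n w := by
  have hd : ∀ k ∈ Finset.range (3*n), k ∉ ({x1, x2} : Finset ℕ) →
      trm n W k - trm n w k = 0 := by
    intro k hk hk2
    simp only [Finset.mem_insert, Finset.mem_singleton] at hk2
    rw [hV k (Finset.mem_range.mp hk) (fun h => hk2 (Or.inl h)) (fun h => hk2 (Or.inr h))]
    ring
  have hsub : ({x1, x2} : Finset ℕ) ⊆ Finset.range (3*n) := by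
    intro a ha
    simp only [Finset.mem_insert, Finset.mem_singleton] at ha
    rcases ha with h | h <;> simp [h, hx1, hx2]
  have hsum : F n W - F n w = ∑ k ∈ ({x1, x2} : Finset ℕ), (trm n W k - trm n w k) := by
    rw [F_eq_sum_trm, F_eq_sum_trm, ← Finset.sum_sub_distrib]
    exact (Finset.sum_subset hsub hd).symm
  rw [Finset.sum_pair hx12] at hsum
  have b1 := trm_bound hn w x1 (hz x1 (by omega)) (hz (x1+1) (by omega))
  have b2 := trm_bound hn w x2 (hz x2 (by omega)) (hz (x2+1) (by omega))
  have B1 := trm_bound hn W x1 (hZ x1 (by omega)) (hZ (x1+1) (by omega))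
  have B2 := trm_bound hn W x2 (hZ x2 (by omega)) (hZ (x2+1) (by omega))
  have m1 := F_mod3 hn w hb (hz 0 (by omega))
  have m2 := F_mod3 hn W hB (hZ 0 (by omega))
  omega

lemma F_swap (hn : 1 ≤ n) (w W : ℕ → Fin 3) (j : ℕ) (hj : j + 1 < 6*n)
    (hsw : ∀ i, W i = w (sw j i)) (hb : bal n w) (hB : bal n W)
    (hz : ∀ k, k ≤ 3*n → NZ n w k) (hZ : ∀ k, k ≤ 3*n → NZ n W k) :
    F n W = F n w := by
  have hWe : W = fun i => w (sw j i) := funext hsw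
  have hVk : ∀ k, k ≠ j+1 → k + 3*n ≠ j+1 →
      vr n W k = vr n w k ∧ vg n W k = vg n w k := by
    intro k h1 h2; rw [hWe]; exact V_sw w j k h1 h2
  have htrm : ∀ k, k ≠ j+1 → k+1 ≠ j+1 → k + 3*n ≠ j+1 → k+1+3*n ≠ j+1 →
      trm n W k = trm n w k := by
    intro k h1 h2 h3 h4
    unfold trm
    rw [(hVk k h1 h3).1, (hVk k h1 h3).2, (hVk (k+1) h2 h4).1, (hVk (k+1) h2 h4).2]
  rcases Nat.lt_trichotomy (j+1) (3*n) with hc | hc | hc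
  · -- interior, a := j+1, affected terms j, j+1
    refine F_close hn w W hb hB hz hZ j (j+1) (by omega) hc (by omega) ?_
    intro k hk h1 h2
    exact htrm k (by omega) (by omega) (by omega) (by omega)
  · -- endpoints case : affected terms 0 and 3n-1
    refine F_close hn w W hb hB hz hZ 0 (3*n-1) (by omega) (by omega) (by omega) ?_
    intro k hk h1 h2
    exact htrm k (by omega) (by omega) (by omega) (by omega)
  · -- a := j+1-3n, affected terms a-1, a
    refine F_close hn w W hb hB hz hZ (j - 3*n) (j+1-3*n) (by omega) (by omega) (by omega) ?_
    intro k hk h1 h2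
    exact htrm k (by omega) (by omega) (by omega) (by omega)

lemma Dpred_symm {x y x' y' : ℤ} (h : Dpred x y x' y') : Dpred x' y' x y := by
  unfold Dpred at *; omega

lemma cnt_rev (w : ℕ → Fin 3) (k : ℕ) (c : Fin 3) (hk : k ≤ 3*n) :
    cnt n (fun j => w (6*n - 1 - j)) k c = cnt n w (3*n - k) c := by
  unfold cnt
  refine Finset.card_bij' (fun a _ => 6*n - 1 - a) (fun a _ => 6*n - 1 - a) ?_ ?_ ?_ ?_
  · intro a ha
    simp only [Finset.mem_filter, Finset.mem_Ico] at ha ⊢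
    exact ⟨by omega, ha.2⟩
  · intro a ha
    simp only [Finset.mem_filter, Finset.mem_Ico] at ha ⊢
    refine ⟨by omega, ?_⟩
    have e : 6*n - 1 - (6*n - 1 - a) = a := by omega
    rw [e]
    exact ha.2
  · intro a ha
    simp only [Finset.mem_filter, Finset.mem_Ico] at ha
    show 6*n - 1 - (6*n - 1 - a) = a
    omega
  · intro a ha
    simp only [Finset.mem_filter, Finset.mem_Ico] at ha
    show 6*n - 1 - (6*n - 1 - a) = a
    omega

lemma F_rev (hn : 1 ≤ n) (w0 wT : ℕ → Fin 3)
    (hrev : ∀ j, j < 6*n → wT j = w0 (6*n - 1 - j))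
    (hz : ∀ k, k ≤ 3*n → NZ n w0 k) :
    F n wT = - F n w0 := by
  have hcnt : ∀ k c, k ≤ 3*n → cnt n wT k c = cnt n w0 (3*n - k) c := by
    intro k c hk
    have : cnt n wT k c = cnt n (fun j => w0 (6*n - 1 - j)) k c := by
      unfold cnt
      congr 1
      refine Finset.filter_congr ?_
      intro j hj
      rw [Finset.mem_Ico] at hj
      rw [hrev j (by omega)]
    rw [this, cnt_rev w0 k c hk]
  have hV : ∀ k, k ≤ 3*n → vr n wT k = vr n w0 (3*n - k) ∧ vg n wT k = vg n w0 (3*n - k) := by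
    intro k hk
    unfold vr vg
    rw [hcnt k 0 hk, hcnt k 1 hk]
    exact ⟨rfl, rfl⟩
  have key : ∀ k, k < 3*n → trm n wT k = - trm n w0 (3*n - 1 - k) := by
    intro k hk
    have e1 : 3*n - k = (3*n - 1 - k) + 1 := by omega
    have e2 : 3*n - (k+1) = 3*n - 1 - k := by omega
    unfold trm
    rw [(hV k (by omega)).1, (hV k (by omega)).2, (hV (k+1) (by omega)).1,
      (hV (k+1) (by omega)).2, e1, e2]
    set a := 3*n - 1 - k with ha
    have hD := step_D (n := n) hn w0 a
    exact dlt_antisymm _ _ _ _ (hz a (by omega)) (hz (a+1) (by omega)) hD (Dpred_symm hD)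
  rw [F_eq_sum_trm, F_eq_sum_trm]
  rw [← Finset.sum_range_reflect (fun k => trm n w0 k) (3*n)]
  rw [← Finset.sum_neg_distrib]
  apply Finset.sum_congr rfl
  intro k hk
  exact key k (Finset.mem_range.mp hk)

theorem combi (T : ℕ) (hn : 1 ≤ n) (w : ℕ → ℕ → Fin 3)
    (hb : ∀ t, t ≤ T → bal n (w t))
    (hstep : ∀ t, t < T → ∃ j, j + 1 < 6*n ∧ ∀ i, w (t+1) i = w t (sw j i))
    (hrev : ∀ j, j < 6*n → w T j = w 0 (6*n - 1 - j)) :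
    ∃ t, t ≤ T ∧ ∃ k, k ≤ 3*n ∧ ∀ c : Fin 3, cnt n (w t) k c = n := by
  by_contra hcon
  push_neg at hcon
  have hNZ : ∀ t, t ≤ T → ∀ k, k ≤ 3*n → NZ n (w t) k := by
    intro t ht k hk
    intro ⟨h0, h1⟩
    unfold vr at h0; unfold vg at h1
    have h2 := window_total hn (w t) k
    obtain ⟨c, hc⟩ := hcon t ht k hk
    rcases fin3 c with rfl | rfl | rfl <;> omega
  have hFt : ∀ t, t ≤ T → F n (w t) = F n (w 0) := by
    intro t
    induction t with
    | zero => intro _; rfl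
    | succ t ih =>
        intro ht
        obtain ⟨j, hj, hsw⟩ := hstep t (by omega)
        rw [F_swap hn (w t) (w (t+1)) j hj hsw (hb t (by omega)) (hb (t+1) ht)
          (hNZ t (by omega)) (hNZ (t+1) ht)]
        exact ih (by omega)
  have h1 : F n (w T) = - F n (w 0) := F_rev hn (w 0) (w T) hrev (hNZ 0 (by omega))
  have h2 := hFt T le_rfl
  have h3 := F_mod3 hn (w 0) (hb 0 (by omega)) (hNZ 0 (by omega) 0 (by omega))
  omega



def key (a : ℝ) (p : ℝ × ℝ) : ℝ := p.2 - a * p.1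
noncomputable def slp (p q : ℝ × ℝ) : ℝ := (q.2 - p.2) / (q.1 - p.1)

lemma key_lt_iff {p q : ℝ × ℝ} (h : p.1 < q.1) (a : ℝ) :
    key a p < key a q ↔ a < slp p q := by
  unfold key slp
  rw [lt_div_iff₀ (by linarith : (0:ℝ) < q.1 - p.1)]
  constructor <;> intro h' <;> nlinarith

lemma key_eq_iff {p q : ℝ × ℝ} (h : p.1 ≠ q.1) (a : ℝ) :
    key a p = key a q ↔ a = slp p q := by
  unfold key slp
  rw [eq_div_iff (by intro h'; apply h; linarith : q.1 - p.1 ≠ 0)]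
  constructor <;> intro h' <;> nlinarith

lemma slp_comm (p q : ℝ × ℝ) : slp p q = slp q p := by
  unfold slp
  rw [← neg_div_neg_eq]
  ring_nf

lemma collinear_of_key_eq (p q r : ℝ × ℝ) (a : ℝ)
    (h1 : key a p = key a q) (h2 : key a p = key a r) :
    Collinear ℝ ({p, q, r} : Set (ℝ × ℝ)) := by
  rw [collinear_iff_of_mem (Set.mem_insert p {q, r})]
  refine ⟨(1, a), ?_⟩
  intro x hx
  have hkey : key a x = key a p := by
    rcases hx with rfl | rfl | rfl
    · rfl
    · exact h1.symm
    · exact h2.symm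
  refine ⟨x.1 - p.1, ?_⟩
  unfold key at hkey
  have : x.2 = (x.1 - p.1) * a + p.2 := by nlinarith [hkey]
  rw [Prod.ext_iff]
  refine ⟨by simp, ?_⟩
  show x.2 = ((x.1 - p.1) • ((1:ℝ), a)).2 + p.2
  rw [Prod.smul_snd, smul_eq_mul, this]
noncomputable section
open Classical

def prs (S : Finset (ℝ × ℝ)) : Finset ((ℝ × ℝ) × (ℝ × ℝ)) :=
  (S ×ˢ S).filter (fun e => e.1.1 < e.2.1)

lemma mem_prs {S : Finset (ℝ × ℝ)} {e : (ℝ × ℝ) × (ℝ × ℝ)} :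
    e ∈ prs S ↔ e.1 ∈ S ∧ e.2 ∈ S ∧ e.1.1 < e.2.1 := by
  unfold prs
  rw [Finset.mem_filter, Finset.mem_product]
  tauto

structure Ctx (S : Finset (ℝ × ℝ)) : Prop where
  gen : ∀ p ∈ S, ∀ q ∈ S, ∀ r ∈ S, p ≠ q → p ≠ r → q ≠ r →
      ¬ Collinear ℝ ({p, q, r} : Set (ℝ × ℝ))
  hx : ∀ p ∈ S, ∀ q ∈ S, p ≠ q → p.1 ≠ q.1

/-- no two points of `S` tied with a third at a common slope -/
lemma Ctx.no_tie {S : Finset (ℝ × ℝ)} (hc : Ctx S) {p q r : ℝ × ℝ} (hp : p ∈ S)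
    (hq : q ∈ S) (hr : r ∈ S) (hpq : p ≠ q) (hpr : p ≠ r) (hqr : q ≠ r) {a : ℝ}
    (h1 : key a p = key a q) (h2 : key a p = key a r) : False :=
  hc.gen p hp q hq r hr hpq hpr hqr (collinear_of_key_eq p q r a h1 h2)

def pkey (e : (ℝ × ℝ) × (ℝ × ℝ)) : ℝ ×ₗ ℝ := toLex (slp e.1 e.2, e.1.1)

lemma pkey_injOn {S : Finset (ℝ × ℝ)} (hc : Ctx S) {e f : (ℝ × ℝ) × (ℝ × ℝ)}
    (he : e ∈ prs S) (hf : f ∈ prs S) (h : pkey e = pkey f) : e = f := by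
  rw [mem_prs] at he hf
  obtain ⟨he1, he2, he3⟩ := he
  obtain ⟨hf1, hf2, hf3⟩ := hf
  have h' : slp e.1 e.2 = slp f.1 f.2 ∧ e.1.1 = f.1.1 := by
    have := congrArg ofLex h
    exact ⟨congrArg Prod.fst this, congrArg Prod.snd this⟩
  have h11 : e.1 = f.1 := by
    by_contra hne
    exact hc.hx e.1 he1 f.1 hf1 hne h'.2
  have h22 : e.2 = f.2 := by
    by_contra hne
    have hx12 : e.1 ≠ e.2 := fun h => absurd (congrArg Prod.fst h) (ne_of_lt he3)
    have hx12' : e.1 ≠ f.2 := by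
      rw [h11]; exact fun h => absurd (congrArg Prod.fst h) (ne_of_lt hf3)
    have k1 : key (slp e.1 e.2) e.1 = key (slp e.1 e.2) e.2 :=
      (key_eq_iff (ne_of_lt he3) _).mpr rfl
    have k2 : key (slp e.1 e.2) e.1 = key (slp e.1 e.2) f.2 := by
      have : slp e.1 e.2 = slp f.1 f.2 := h'.1
      rw [this, h11]
      exact (key_eq_iff (ne_of_lt hf3) _).mpr rfl
    exact hc.no_tie he1 he2 hf2 hx12 hx12' hne k1 k2
  exact Prod.ext h11 h22

def KS (S : Finset (ℝ × ℝ)) : Finset (ℝ ×ₗ ℝ) := (prs S).image pkey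

def RT (S : Finset (ℝ × ℝ)) : ℕ := (KS S).card

def iso (S : Finset (ℝ × ℝ)) : Fin (RT S) ≃o {x // x ∈ KS S} :=
  (KS S).orderIsoOfFin rfl

def idx (S : Finset (ℝ × ℝ)) (e : (ℝ × ℝ) × (ℝ × ℝ)) : ℕ :=
  if h : pkey e ∈ KS S then ((iso S).symm ⟨pkey e, h⟩ : Fin (RT S)).val else 0

lemma pkey_mem {S : Finset (ℝ × ℝ)} {e} (he : e ∈ prs S) : pkey e ∈ KS S :=
  Finset.mem_image_of_mem pkey he

lemma idx_lt {S : Finset (ℝ × ℝ)} {e} (he : e ∈ prs S) : idx S e < RT S := by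
  unfold idx
  rw [dif_pos (pkey_mem he)]
  exact ((iso S).symm ⟨pkey e, pkey_mem he⟩).isLt

lemma idx_inj {S : Finset (ℝ × ℝ)} (hc : Ctx S) {e f} (he : e ∈ prs S) (hf : f ∈ prs S)
    (h : idx S e = idx S f) : e = f := by
  unfold idx at h
  rw [dif_pos (pkey_mem he), dif_pos (pkey_mem hf)] at h
  have := (iso S).symm.injective (Fin.val_injective h)
  apply pkey_injOn hc he hf
  exact Subtype.ext_iff.mp this

lemma idx_mono {S : Finset (ℝ × ℝ)} {e f} (he : e ∈ prs S) (hf : f ∈ prs S)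
    (h : slp e.1 e.2 < slp f.1 f.2) : idx S e < idx S f := by
  unfold idx
  rw [dif_pos (pkey_mem he), dif_pos (pkey_mem hf)]
  have hlt : (⟨pkey e, pkey_mem he⟩ : {x // x ∈ KS S}) < ⟨pkey f, pkey_mem hf⟩ := by
    rw [Subtype.mk_lt_mk]
    unfold pkey
    exact (Prod.Lex.lt_iff).mpr (Or.inl h)
  exact (iso S).symm.lt_iff_lt.mpr hlt

lemma exists_idx {S : Finset (ℝ × ℝ)} {t : ℕ} (ht : t < RT S) :
    ∃ e ∈ prs S, idx S e = t := by
  obtain ⟨e, he, hke⟩ := Finset.mem_image.mp ((iso S ⟨t, ht⟩).2)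
  refine ⟨e, he, ?_⟩
  unfold idx
  rw [dif_pos (pkey_mem he)]
  have : (⟨pkey e, pkey_mem he⟩ : {x // x ∈ KS S}) = iso S ⟨t, ht⟩ := Subtype.ext hke
  rw [this, OrderIso.symm_apply_apply]

def proc (S : Finset (ℝ × ℝ)) (t : ℕ) (e : (ℝ × ℝ) × (ℝ × ℝ)) : Prop := idx S e < t

/-- the sweep order at time t -/
def ltt (S : Finset (ℝ × ℝ)) (t : ℕ) (p q : ℝ × ℝ) : Prop :=
  (p.1 < q.1 ∧ ¬ proc S t (p, q)) ∨ (q.1 < p.1 ∧ proc S t (q, p))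

lemma ltt_irrefl {S t p} : ¬ ltt S t p p := by
  unfold ltt; simp

lemma ltt_asymm {S t p q} (h1 : ltt S t p q) (h2 : ltt S t q p) : False := by
  unfold ltt at h1 h2
  rcases h1 with ⟨h1a, h1b⟩ | ⟨h1a, h1b⟩ <;> rcases h2 with ⟨h2a, h2b⟩ | ⟨h2a, h2b⟩ <;>
    first | linarith | tauto

lemma ltt_total {S : Finset (ℝ × ℝ)} (hc : Ctx S) {t p q} (hp : p ∈ S) (hq : q ∈ S)
    (hne : p ≠ q) : ltt S t p q ∨ ltt S t q p := by
  rcases lt_trichotomy p.1 q.1 with h | h | h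
  · by_cases hpr : proc S t (p, q)
    · exact Or.inr (Or.inr ⟨h, hpr⟩)
    · exact Or.inl (Or.inl ⟨h, hpr⟩)
  · exact absurd h (hc.hx p hp q hq hne)
  · by_cases hpr : proc S t (q, p)
    · exact Or.inl (Or.inr ⟨h, hpr⟩)
    · exact Or.inr (Or.inl ⟨h, hpr⟩)

/-- validity of a test slope for a canonical pair -/
def vld (S : Finset (ℝ × ℝ)) (t : ℕ) (μ : ℝ) (e : (ℝ × ℝ) × (ℝ × ℝ)) : Prop :=
  (proc S t e → slp e.1 e.2 < μ) ∧ (¬ proc S t e → μ < slp e.1 e.2)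

lemma key_lt_of_ltt {S : Finset (ℝ × ℝ)} {t : ℕ} {μ : ℝ} {p q : ℝ × ℝ}
    (h : ltt S t p q)
    (hv1 : p.1 < q.1 → vld S t μ (p, q)) (hv2 : q.1 < p.1 → vld S t μ (q, p)) :
    key μ p < key μ q := by
  rcases h with ⟨hlt, hnp⟩ | ⟨hlt, hpr⟩
  · exact (key_lt_iff hlt μ).mpr ((hv1 hlt).2 hnp)
  · have hs : slp q p < μ := (hv2 hlt).1 hpr
    have h1 : ¬ key μ q < key μ p := by
      rw [key_lt_iff hlt μ]; linarith
    have h2 : key μ q ≠ key μ p := by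
      intro h'
      have := (key_eq_iff (ne_of_lt hlt) μ).mp h'
      linarith
    rcases lt_trichotomy (key μ p) (key μ q) with h' | h' | h'
    · exact h'
    · exact absurd h'.symm h2
    · exact absurd h' h1

lemma exists_between (A B avoid : Finset ℝ) (h : ∀ a ∈ A, ∀ b ∈ B, a < b) :
    ∃ μ : ℝ, μ ∉ avoid ∧ (∀ a ∈ A, a < μ) ∧ (∀ b ∈ B, μ < b) := by
  have main : ∃ I : Set ℝ, I.Infinite ∧ (∀ μ ∈ I, (∀ a ∈ A, a < μ) ∧ (∀ b ∈ B, μ < b)) := by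
    rcases A.eq_empty_or_nonempty with hA | hA <;> rcases B.eq_empty_or_nonempty with hB | hB
    · exact ⟨Set.univ, Set.infinite_univ, fun μ _ => ⟨by simp [hA], by simp [hB]⟩⟩
    · refine ⟨Set.Iio (B.min' hB), Set.Iio_infinite _, fun μ hμ => ⟨by simp [hA], ?_⟩⟩
      intro b hb
      exact lt_of_lt_of_le hμ (B.min'_le b hb)
    · refine ⟨Set.Ioi (A.max' hA), Set.Ioi_infinite _, fun μ hμ => ⟨?_, by simp [hB]⟩⟩
      intro a ha
      exact lt_of_le_of_lt (A.le_max' a ha) hμ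
    · have hlt : A.max' hA < B.min' hB := h _ (A.max'_mem hA) _ (B.min'_mem hB)
      refine ⟨Set.Ioo (A.max' hA) (B.min' hB), Set.Ioo_infinite hlt, fun μ hμ => ⟨?_, ?_⟩⟩
      · intro a ha
        exact lt_of_le_of_lt (A.le_max' a ha) hμ.1
      · intro b hb
        exact lt_of_lt_of_le hμ.2 (B.min'_le b hb)
  obtain ⟨I, hI, hprop⟩ := main
  obtain ⟨μ, hμI, hμav⟩ := hI.exists_notMem_finset avoid
  exact ⟨μ, hμav, (hprop μ hμI).1, (hprop μ hμI).2⟩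

lemma exists_valid {S : Finset (ℝ × ℝ)} (t : ℕ) (E : Finset ((ℝ × ℝ) × (ℝ × ℝ)))
    (h : ∀ e ∈ E, ∀ f ∈ E, proc S t e → ¬ proc S t f → slp e.1 e.2 < slp f.1 f.2)
    (avoid : Finset ℝ) :
    ∃ μ : ℝ, μ ∉ avoid ∧ ∀ e ∈ E, vld S t μ e := by
  have hAB : ∀ a ∈ (E.filter (fun e => proc S t e)).image (fun e => slp e.1 e.2),
      ∀ b ∈ (E.filter (fun e => ¬ proc S t e)).image (fun e => slp e.1 e.2), a < b := by
    intro a ha b hb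
    obtain ⟨e, he, rfl⟩ := Finset.mem_image.mp ha
    obtain ⟨f, hf, rfl⟩ := Finset.mem_image.mp hb
    rw [Finset.mem_filter] at he hf
    exact h e he.1 f hf.1 he.2 hf.2
  obtain ⟨μ, hav, h1, h2⟩ := exists_between _ _ avoid hAB
  refine ⟨μ, hav, fun e he => ⟨fun hp => ?_, fun hp => ?_⟩⟩
  · exact h1 _ (Finset.mem_image_of_mem _ (Finset.mem_filter.mpr ⟨he, hp⟩))
  · exact h2 _ (Finset.mem_image_of_mem _ (Finset.mem_filter.mpr ⟨he, hp⟩))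

lemma proc_slope_lt {S : Finset (ℝ × ℝ)} {t : ℕ} {e f} (he : e ∈ prs S) (hf : f ∈ prs S)
    (hne : slp e.1 e.2 ≠ slp f.1 f.2) (hp : proc S t e) (hnp : ¬ proc S t f) :
    slp e.1 e.2 < slp f.1 f.2 := by
  rcases lt_trichotomy (slp e.1 e.2) (slp f.1 f.2) with h | h | h
  · exact h
  · exact absurd h hne
  · have := idx_mono hf he h
    unfold proc at hp hnp
    omega

/-- unordered "processed" predicate -/
def prc (S : Finset (ℝ × ℝ)) (t : ℕ) (p q : ℝ × ℝ) : Prop :=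
  if p.1 < q.1 then proc S t (p, q) else proc S t (q, p)

/-- unordered validity of a test slope -/
def vldp (S : Finset (ℝ × ℝ)) (t : ℕ) (μ : ℝ) (p q : ℝ × ℝ) : Prop :=
  (prc S t p q → slp p q < μ) ∧ (¬ prc S t p q → μ < slp p q)

lemma ltt_iff_key_lt {S : Finset (ℝ × ℝ)} (hc : Ctx S) {t : ℕ} {μ : ℝ} {p q : ℝ × ℝ}
    (hp : p ∈ S) (hq : q ∈ S) (hne : p ≠ q) (hv : vldp S t μ p q) :
    ltt S t p q ↔ key μ p < key μ q := by
  have hxne := hc.hx p hp q hq hne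
  have fwd : ∀ a b : ℝ × ℝ, a ∈ S → b ∈ S → a ≠ b → vldp S t μ a b →
      ltt S t a b → key μ a < key μ b := by
    intro a b ha hb hab hv h
    have hxab := hc.hx a ha b hb hab
    rcases h with ⟨hlt, hnp⟩ | ⟨hlt, hpr⟩
    · have hprc : ¬ prc S t a b := by unfold prc; rw [if_pos hlt]; exact hnp
      exact (key_lt_iff hlt μ).mpr (hv.2 hprc)
    · have hprc : prc S t a b := by
        unfold prc; rw [if_neg (by linarith)]; exact hpr
      have hs : slp b a < μ := by rw [← slp_comm]; exact hv.1 hprc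
      have h1 : ¬ key μ b < key μ a := by rw [key_lt_iff hlt μ]; linarith
      have h2 : key μ b ≠ key μ a := by
        intro h'
        have := (key_eq_iff (ne_of_lt hlt) μ).mp h'
        linarith
      rcases lt_trichotomy (key μ a) (key μ b) with h' | h' | h'
      · exact h'
      · exact absurd h'.symm h2
      · exact absurd h' h1
  constructor
  · exact fwd p q hp hq hne hv
  · intro h
    rcases ltt_total hc hp hq hne (t := t) with h' | h'
    · exact h'
    · have hv' : vldp S t μ q p := by
        unfold vldp prc at hv ⊢
        rw [slp_comm q p]
        rcases lt_trichotomy p.1 q.1 with hh | hh | hh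
        · rw [if_neg (by linarith)]; rw [if_pos hh] at hv; exact hv
        · exact absurd hh hxne
        · rw [if_pos hh]; rw [if_neg (by linarith)] at hv; exact hv
      have := fwd q p hq hp (Ne.symm hne) hv' h'
      linarith

lemma prc_compat {S : Finset (ℝ × ℝ)} {t : ℕ} {a b c d : ℝ × ℝ}
    (ha : a ∈ S) (hb : b ∈ S) (hcm : c ∈ S) (hd : d ∈ S)
    (hab : a.1 ≠ b.1) (hcd : c.1 ≠ d.1) (hne : slp a b ≠ slp c d)
    (h1 : prc S t a b) (h2 : ¬ prc S t c d) : slp a b < slp c d := by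
  unfold prc at h1 h2
  rcases hab.lt_or_gt with hab' | hab' <;> rcases hcd.lt_or_gt with hcd' | hcd'
  · rw [if_pos hab'] at h1; rw [if_pos hcd'] at h2
    exact proc_slope_lt (mem_prs.mpr ⟨ha, hb, hab'⟩) (mem_prs.mpr ⟨hcm, hd, hcd'⟩) hne h1 h2
  · rw [if_pos hab'] at h1; rw [if_neg (by linarith)] at h2
    rw [slp_comm c d] at hne ⊢
    exact proc_slope_lt (mem_prs.mpr ⟨ha, hb, hab'⟩) (mem_prs.mpr ⟨hd, hcm, hcd'⟩) hne h1 h2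
  · rw [if_neg (by linarith)] at h1; rw [if_pos hcd'] at h2
    rw [slp_comm a b] at hne ⊢
    exact proc_slope_lt (mem_prs.mpr ⟨hb, ha, hab'⟩) (mem_prs.mpr ⟨hcm, hd, hcd'⟩) hne h1 h2
  · rw [if_neg (by linarith)] at h1; rw [if_neg (by linarith)] at h2
    rw [slp_comm a b] at hne ⊢; rw [slp_comm c d] at hne ⊢
    exact proc_slope_lt (mem_prs.mpr ⟨hb, ha, hab'⟩) (mem_prs.mpr ⟨hd, hcm, hcd'⟩) hne h1 h2

lemma exists_mu3 (s1 s2 s3 : ℝ) (b1 b2 b3 : Prop)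
    (h12 : b1 → ¬b2 → s1 < s2) (h21 : b2 → ¬b1 → s2 < s1)
    (h13 : b1 → ¬b3 → s1 < s3) (h31 : b3 → ¬b1 → s3 < s1)
    (h23 : b2 → ¬b3 → s2 < s3) (h32 : b3 → ¬b2 → s3 < s2) :
    ∃ μ : ℝ, ((b1 → s1 < μ) ∧ (¬b1 → μ < s1)) ∧ ((b2 → s2 < μ) ∧ (¬b2 → μ < s2)) ∧
      ((b3 → s3 < μ) ∧ (¬b3 → μ < s3)) := by
  classical
  have m1 := le_max_left s1 (max s2 s3)
  have m2 : s2 ≤ max s1 (max s2 s3) := le_trans (le_max_left _ _) (le_max_right _ _)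
  have m3 : s3 ≤ max s1 (max s2 s3) := le_trans (le_max_right _ _) (le_max_right _ _)
  have n1 := min_le_left s1 (min s2 s3)
  have n2 : min s1 (min s2 s3) ≤ s2 := le_trans (min_le_right _ _) (min_le_left _ _)
  have n3 : min s1 (min s2 s3) ≤ s3 := le_trans (min_le_right _ _) (min_le_right _ _)
  have mm12 := le_max_left s1 s2
  have mm21 := le_max_right s1 s2
  have mm13 := le_max_left s1 s3
  have mm31 := le_max_right s1 s3
  have mm23 := le_max_left s2 s3
  have mm32 := le_max_right s2 s3
  have nn12 := min_le_left s1 s2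
  have nn21 := min_le_right s1 s2
  have nn13 := min_le_left s1 s3
  have nn31 := min_le_right s1 s3
  have nn23 := min_le_left s2 s3
  have nn32 := min_le_right s2 s3
  by_cases hb1 : b1 <;> by_cases hb2 : b2 <;> by_cases hb3 : b3
  · refine ⟨max s1 (max s2 s3) + 1, ⟨fun _ => by linarith, fun h => absurd hb1 h⟩,
      ⟨fun _ => by linarith, fun h => absurd hb2 h⟩, ⟨fun _ => by linarith, fun h => absurd hb3 h⟩⟩
  · have u1 := h13 hb1 hb3
    have u2 := h23 hb2 hb3
    have hmax : max s1 s2 < s3 := max_lt u1 u2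
    refine ⟨(max s1 s2 + s3) / 2, ⟨fun _ => by linarith, fun h => absurd hb1 h⟩,
      ⟨fun _ => by linarith, fun h => absurd hb2 h⟩, ⟨fun h => absurd h hb3, fun _ => by linarith⟩⟩
  · have u1 := h12 hb1 hb2
    have u2 := h32 hb3 hb2
    have hmax : max s1 s3 < s2 := max_lt u1 u2
    refine ⟨(max s1 s3 + s2) / 2, ⟨fun _ => by linarith, fun h => absurd hb1 h⟩,
      ⟨fun h => absurd h hb2, fun _ => by linarith⟩, ⟨fun _ => by linarith, fun h => absurd hb3 h⟩⟩
  · have u1 := h12 hb1 hb2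
    have u2 := h13 hb1 hb3
    have hmin : s1 < min s2 s3 := lt_min u1 u2
    refine ⟨(s1 + min s2 s3) / 2, ⟨fun _ => by linarith, fun h => absurd hb1 h⟩,
      ⟨fun h => absurd h hb2, fun _ => by linarith⟩, ⟨fun h => absurd h hb3, fun _ => by linarith⟩⟩
  · have u1 := h21 hb2 hb1
    have u2 := h31 hb3 hb1
    have hmax : max s2 s3 < s1 := max_lt u1 u2
    refine ⟨(max s2 s3 + s1) / 2, ⟨fun h => absurd h hb1, fun _ => by linarith⟩,
      ⟨fun _ => by linarith, fun h => absurd hb2 h⟩, ⟨fun _ => by linarith, fun h => absurd hb3 h⟩⟩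
  · have u1 := h21 hb2 hb1
    have u2 := h23 hb2 hb3
    have hmin : s2 < min s1 s3 := lt_min u1 u2
    refine ⟨(s2 + min s1 s3) / 2, ⟨fun h => absurd h hb1, fun _ => by linarith⟩,
      ⟨fun _ => by linarith, fun h => absurd hb2 h⟩, ⟨fun h => absurd h hb3, fun _ => by linarith⟩⟩
  · have u1 := h31 hb3 hb1
    have u2 := h32 hb3 hb2
    have hmin : s3 < min s1 s2 := lt_min u1 u2
    refine ⟨(s3 + min s1 s2) / 2, ⟨fun h => absurd h hb1, fun _ => by linarith⟩,
      ⟨fun h => absurd h hb2, fun _ => by linarith⟩, ⟨fun _ => by linarith, fun h => absurd hb3 h⟩⟩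
  · refine ⟨min s1 (min s2 s3) - 1, ⟨fun h => absurd h hb1, fun _ => by linarith⟩,
      ⟨fun h => absurd h hb2, fun _ => by linarith⟩, ⟨fun h => absurd h hb3, fun _ => by linarith⟩⟩

lemma slp_ne_of_triple {S : Finset (ℝ × ℝ)} (hc : Ctx S) {p q r : ℝ × ℝ}
    (hp : p ∈ S) (hq : q ∈ S) (hr : r ∈ S) (hpq : p ≠ q) (hpr : p ≠ r) (hqr : q ≠ r) :
    slp p q ≠ slp p r := by
  intro h
  have hxpq := hc.hx p hp q hq hpq
  have hxpr := hc.hx p hp r hr hpr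
  have k1 : key (slp p q) p = key (slp p q) q := (key_eq_iff hxpq _).mpr rfl
  have k2 : key (slp p q) p = key (slp p q) r := by
    rw [h]; exact (key_eq_iff hxpr _).mpr rfl
  exact hc.no_tie hp hq hr hpq hpr hqr k1 k2

lemma slp_ne3 {S : Finset (ℝ × ℝ)} (hc : Ctx S) {p q r : ℝ × ℝ}
    (hp : p ∈ S) (hq : q ∈ S) (hr : r ∈ S) (hpq : p ≠ q) (hpr : p ≠ r) (hqr : q ≠ r) :
    slp p q ≠ slp q r ∧ slp p q ≠ slp p r ∧ slp q r ≠ slp p r := by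
  refine ⟨?_, slp_ne_of_triple hc hp hq hr hpq hpr hqr, ?_⟩
  · rw [slp_comm p q]
    exact slp_ne_of_triple hc hq hp hr (Ne.symm hpq) hqr hpr
  · rw [slp_comm q r, slp_comm p r]
    exact slp_ne_of_triple hc hr hq hp (Ne.symm hqr) (Ne.symm hpr) (Ne.symm hpq)

lemma ltt_trans {S : Finset (ℝ × ℝ)} (hc : Ctx S) {t : ℕ} {p q r : ℝ × ℝ}
    (hp : p ∈ S) (hq : q ∈ S) (hr : r ∈ S)
    (hpq : p ≠ q) (hqr : q ≠ r) (hpr : p ≠ r)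
    (h1 : ltt S t p q) (h2 : ltt S t q r) : ltt S t p r := by
  obtain ⟨n12, n13, n23⟩ := slp_ne3 hc hp hq hr hpq hpr hqr
  have hxpq := hc.hx p hp q hq hpq
  have hxqr := hc.hx q hq r hr hqr
  have hxpr := hc.hx p hp r hr hpr
  obtain ⟨μ, hv1, hv2, hv3⟩ := exists_mu3 (slp p q) (slp q r) (slp p r)
    (prc S t p q) (prc S t q r) (prc S t p r)
    (fun hA hB => prc_compat hp hq hq hr hxpq hxqr n12 hA hB)
    (fun hA hB => prc_compat hq hr hp hq hxqr hxpq n12.symm hA hB)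
    (fun hA hB => prc_compat hp hq hp hr hxpq hxpr n13 hA hB)
    (fun hA hB => prc_compat hp hr hp hq hxpr hxpq n13.symm hA hB)
    (fun hA hB => prc_compat hq hr hp hr hxqr hxpr n23 hA hB)
    (fun hA hB => prc_compat hp hr hq hr hxpr hxqr n23.symm hA hB)
  have k1 := (ltt_iff_key_lt hc hp hq hpq hv1).mp h1
  have k2 := (ltt_iff_key_lt hc hq hr hqr hv2).mp h2
  exact (ltt_iff_key_lt hc hp hr hpr hv3).mpr (by linarith)

def rnk (S : Finset (ℝ × ℝ)) (t : ℕ) (p : ℝ × ℝ) : ℕ :=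
  (S.filter (fun q => ltt S t q p)).card

lemma rnk_lt_card {S : Finset (ℝ × ℝ)} {t : ℕ} {p : ℝ × ℝ} (hp : p ∈ S) :
    rnk S t p < S.card := by
  have hsub : S.filter (fun q => ltt S t q p) ⊆ S.erase p := by
    intro q hq
    rw [Finset.mem_filter] at hq
    refine Finset.mem_erase.mpr ⟨?_, hq.1⟩
    rintro rfl
    exact ltt_irrefl hq.2
  calc rnk S t p ≤ (S.erase p).card := Finset.card_le_card hsub
    _ < S.card := Finset.card_erase_lt_of_mem hp

lemma rnk_strictMono {S : Finset (ℝ × ℝ)} (hc : Ctx S) {t : ℕ} {p q : ℝ × ℝ}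
    (hp : p ∈ S) (hq : q ∈ S) (h : ltt S t p q) : rnk S t p < rnk S t q := by
  have hpq : p ≠ q := by rintro rfl; exact ltt_irrefl h
  apply Finset.card_lt_card
  rw [Finset.ssubset_iff_of_subset]
  · exact ⟨p, Finset.mem_filter.mpr ⟨hp, h⟩, fun hmem =>
      ltt_irrefl ((Finset.mem_filter.mp hmem).2)⟩
  · intro r hr
    rw [Finset.mem_filter] at hr ⊢
    obtain ⟨hrS, hrp⟩ := hr
    have hrp' : r ≠ p := by rintro rfl; exact ltt_irrefl hrp
    have hrq : r ≠ q := by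
      rintro rfl
      exact ltt_asymm h hrp
    exact ⟨hrS, ltt_trans hc hrS hp hq hrp' hpq hrq hrp h⟩

lemma rnk_lt_iff {S : Finset (ℝ × ℝ)} (hc : Ctx S) {t : ℕ} {p q : ℝ × ℝ}
    (hp : p ∈ S) (hq : q ∈ S) (hne : p ≠ q) :
    ltt S t p q ↔ rnk S t p < rnk S t q := by
  constructor
  · exact rnk_strictMono hc hp hq
  · intro h
    rcases ltt_total hc hp hq hne (t := t) with h' | h'
    · exact h'
    · have := rnk_strictMono hc hq hp h'
      omega

lemma rnk_injOn {S : Finset (ℝ × ℝ)} (hc : Ctx S) {t : ℕ} {p q : ℝ × ℝ}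
    (hp : p ∈ S) (hq : q ∈ S) (h : rnk S t p = rnk S t q) : p = q := by
  by_contra hne
  rcases ltt_total hc hp hq hne (t := t) with h' | h'
  · have := rnk_strictMono hc hp hq h'; omega
  · have := rnk_strictMono hc hq hp h'; omega

lemma rnk_surj {S : Finset (ℝ × ℝ)} (hc : Ctx S) {t : ℕ} {j : ℕ} (hj : j < S.card) :
    ∃ p ∈ S, rnk S t p = j := by
  have himg : S.image (rnk S t) = Finset.range S.card := by
    apply Finset.eq_of_subset_of_card_le
    · intro x hx
      obtain ⟨p, hp, rfl⟩ := Finset.mem_image.mp hx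
      exact Finset.mem_range.mpr (rnk_lt_card hp)
    · rw [Finset.card_range, Finset.card_image_of_injOn]
      intro p hp q hq
      exact rnk_injOn hc hp hq
  have : j ∈ S.image (rnk S t) := by rw [himg]; exact Finset.mem_range.mpr hj
  obtain ⟨p, hp, hrp⟩ := Finset.mem_image.mp this
  exact ⟨p, hp, hrp⟩

def pnt (S : Finset (ℝ × ℝ)) (t : ℕ) (j : ℕ) : ℝ × ℝ :=
  if h : ∃ p, p ∈ S ∧ rnk S t p = j then h.choose else (0, 0)

lemma pnt_spec {S : Finset (ℝ × ℝ)} (hc : Ctx S) {t j : ℕ} (hj : j < S.card) :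
    pnt S t j ∈ S ∧ rnk S t (pnt S t j) = j := by
  obtain ⟨p, hp, hrp⟩ := rnk_surj hc hj (t := t)
  have hex : ∃ p, p ∈ S ∧ rnk S t p = j := ⟨p, hp, hrp⟩
  unfold pnt
  rw [dif_pos hex]
  exact hex.choose_spec

lemma pnt_rnk {S : Finset (ℝ × ℝ)} (hc : Ctx S) {t : ℕ} {p : ℝ × ℝ} (hp : p ∈ S) :
    pnt S t (rnk S t p) = p := by
  have hex : ∃ q, q ∈ S ∧ rnk S t q = rnk S t p := ⟨p, hp, rfl⟩
  unfold pnt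
  rw [dif_pos hex]
  exact rnk_injOn hc hex.choose_spec.1 hp hex.choose_spec.2

lemma pnt_big {S : Finset (ℝ × ℝ)} {t j : ℕ} (hj : ¬ j < S.card) : pnt S t j = (0, 0) := by
  unfold pnt
  rw [dif_neg]
  rintro ⟨p, hp, hrp⟩
  exact hj (hrp ▸ rnk_lt_card hp)
set_option maxHeartbeats 1000000 in
lemma swap_step {S : Finset (ℝ × ℝ)} (hc : Ctx S) {t : ℕ} (ht : t < RT S) :
    ∃ j, j + 1 < S.card ∧ ∀ i, pnt S (t+1) i = pnt S t (sw j i) := by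
  obtain ⟨e, heprs, hidx⟩ := exists_idx ht
  obtain ⟨p, q⟩ := e
  obtain ⟨hp, hq, hlt⟩ := mem_prs.mp heprs
  simp only at hp hq hlt
  have hpq : p ≠ q := fun h => (ne_of_lt hlt) (congrArg Prod.fst h)
  have hnp : ¬ proc S t (p, q) := by unfold proc; omega
  have hpr1 : proc S (t+1) (p, q) := by unfold proc; omega
  have hother : ∀ f ∈ prs S, f ≠ (p, q) → (proc S (t+1) f ↔ proc S t f) := by
    intro f hf hne
    unfold proc
    have : idx S f ≠ t := fun h => hne (idx_inj hc hf heprs (h.trans hidx.symm))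
    omega
  have lttEq : ∀ a b : ℝ × ℝ, a ∈ S → b ∈ S → ¬(a = p ∧ b = q) → ¬(a = q ∧ b = p) →
      (ltt S (t+1) a b ↔ ltt S t a b) := by
    intro a b ha hb h1 h2
    unfold ltt
    rcases lt_trichotomy a.1 b.1 with hab | hab | hab
    · have hba : ¬ b.1 < a.1 := by linarith
      have hm : (a, b) ∈ prs S := mem_prs.mpr ⟨ha, hb, hab⟩
      have hne : (a, b) ≠ (p, q) := by
        intro hh
        exact h1 ⟨congrArg Prod.fst hh, congrArg Prod.snd hh⟩
      have hiff := hother _ hm hne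
      tauto
    · have h1' : ¬ a.1 < b.1 := by linarith
      have h2' : ¬ b.1 < a.1 := by linarith
      tauto
    · have hba : ¬ a.1 < b.1 := by linarith
      have hm : (b, a) ∈ prs S := mem_prs.mpr ⟨hb, ha, hab⟩
      have hne : (b, a) ≠ (p, q) := by
        intro hh
        exact h2 ⟨congrArg Prod.snd hh, congrArg Prod.fst hh⟩
      have hiff := hother _ hm hne
      tauto
  have lpq : ltt S t p q := Or.inl ⟨hlt, hnp⟩
  have lqp1 : ltt S (t+1) q p := Or.inr ⟨hlt, hpr1⟩
  have hadj : ∀ r ∈ S, ¬ (ltt S t p r ∧ ltt S t r q) := by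
    rintro r hr ⟨hA, hB⟩
    have hrp : r ≠ p := by rintro rfl; exact ltt_irrefl hA
    have hrq : r ≠ q := by rintro rfl; exact ltt_irrefl hB
    have hA1 : ltt S (t+1) p r := (lttEq p r hp hr
      (fun h => hrq h.2) (fun h => hpq h.1)).mpr hA
    have hB1 : ltt S (t+1) r q := (lttEq r q hr hq (fun h => hrp h.1) (fun h => hpq h.2.symm)).mpr hB
    have := ltt_trans hc hp hr hq hrp.symm hrq hpq hA1 hB1
    exact ltt_asymm this lqp1
  -- rank facts
  have filtq : S.filter (fun r => ltt S t r q) = insert p (S.filter (fun r => ltt S t r p)) := by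
    ext r
    rw [Finset.mem_insert, Finset.mem_filter, Finset.mem_filter]
    constructor
    · rintro ⟨hr, hrq⟩
      by_cases hrp : r = p
      · exact Or.inl hrp
      · refine Or.inr ⟨hr, ?_⟩
        have hrq' : r ≠ q := by rintro rfl; exact ltt_irrefl hrq
        rcases ltt_total hc hr hp (t := t) hrp with h' | h'
        · exact h'
        · exact absurd ⟨h', hrq⟩ (hadj r hr)
    · rintro (rfl | ⟨hr, hrp⟩)
      · exact ⟨hp, lpq⟩
      · have hrp' : r ≠ p := by rintro rfl; exact ltt_irrefl hrp
        have hrq' : r ≠ q := by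
          rintro rfl
          exact ltt_asymm lpq hrp
        exact ⟨hr, ltt_trans hc hr hp hq hrp' hpq hrq' hrp lpq⟩
  have hrq : rnk S t q = rnk S t p + 1 := by
    unfold rnk
    rw [filtq, Finset.card_insert_of_notMem]
    intro hmem
    exact ltt_irrefl (Finset.mem_filter.mp hmem).2
  have h'p : rnk S (t+1) p = rnk S t p + 1 := by
    unfold rnk
    have : S.filter (fun r => ltt S (t+1) r p) = insert q (S.filter (fun r => ltt S t r p)) := by
      ext r
      rw [Finset.mem_insert, Finset.mem_filter, Finset.mem_filter]
      constructor
      · rintro ⟨hr, hrp⟩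
        by_cases hrq' : r = q
        · exact Or.inl hrq'
        · have hrp' : r ≠ p := by rintro rfl; exact ltt_irrefl hrp
          exact Or.inr ⟨hr, (lttEq r p hr hp (fun h => hrp' h.1)
            (fun h => hrq' h.1)).mp hrp⟩
      · rintro (rfl | ⟨hr, hrp⟩)
        · exact ⟨hq, lqp1⟩
        · have hrp' : r ≠ p := by rintro rfl; exact ltt_irrefl hrp
          have hrq' : r ≠ q := by
            rintro rfl
            exact ltt_asymm lpq hrp
          exact ⟨hr, (lttEq r p hr hp (fun h => hrp' h.1)
            (fun h => hrq' h.1)).mpr hrp⟩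
    rw [this, Finset.card_insert_of_notMem]
    intro hmem
    exact ltt_asymm lpq (Finset.mem_filter.mp hmem).2
  have h'q : rnk S (t+1) q = rnk S t p := by
    unfold rnk
    have : S.filter (fun r => ltt S (t+1) r q) = S.filter (fun r => ltt S t r p) := by
      ext r
      rw [Finset.mem_filter, Finset.mem_filter]
      constructor
      · rintro ⟨hr, hrq1⟩
        have hrp : r ≠ p := by
          rintro rfl
          exact ltt_asymm hrq1 lqp1
        have hrq' : r ≠ q := by rintro rfl; exact ltt_irrefl hrq1
        have hrt : ltt S t r q := (lttEq r q hr hq (fun h => hrp h.1)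
          (fun h => hpq h.2.symm)).mp hrq1
        rcases ltt_total hc hr hp (t := t) hrp with h' | h'
        · exact ⟨hr, h'⟩
        · exact absurd ⟨h', hrt⟩ (hadj r hr)
      · rintro ⟨hr, hrp⟩
        have hrp' : r ≠ p := by rintro rfl; exact ltt_irrefl hrp
        have hrq' : r ≠ q := by
          rintro rfl
          exact ltt_asymm lpq hrp
        have hrt : ltt S t r q := ltt_trans hc hr hp hq hrp' hpq hrq' hrp lpq
        exact ⟨hr, (lttEq r q hr hq (fun h => hrp' h.1) (fun h => hpq h.2.symm)).mpr hrt⟩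
    rw [this]
  have h'r : ∀ r ∈ S, r ≠ p → r ≠ q → rnk S (t+1) r = rnk S t r := by
    intro r hr hrp hrq'
    unfold rnk
    congr 1
    apply Finset.filter_congr
    intro s hs
    exact lttEq s r hs hr (fun h => hrq' h.2) (fun h => hrp h.2)
  have hqcard : rnk S t q < S.card := rnk_lt_card hq
  refine ⟨rnk S t p, by omega, ?_⟩
  intro i
  by_cases hi : i < S.card
  · rcases Nat.lt_trichotomy i (rnk S t p) with hij | hij | hij
    · -- i ≠ j, i ≠ j+1
      have hsw : sw (rnk S t p) i = i := by unfold sw; split_ifs <;> omega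
      rw [hsw]
      obtain ⟨hxS, hxr⟩ := pnt_spec hc hi (t := t)
      set x := pnt S t i
      have hxp : x ≠ p := fun h => by rw [h] at hxr; omega
      have hxq : x ≠ q := fun h => by rw [h] at hxr; omega
      have : rnk S (t+1) x = i := by rw [h'r x hxS hxp hxq]; exact hxr
      rw [← this, pnt_rnk hc hxS]
    · -- i = j : new point is q
      have hsw : sw (rnk S t p) i = rnk S t p + 1 := by unfold sw; split_ifs <;> omega
      rw [hsw, hij]
      have e1 : pnt S (t+1) (rnk S t p) = q := by
        conv_lhs => rw [← h'q]
        exact pnt_rnk hc hq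
      have e2 : pnt S t (rnk S t p + 1) = q := by
        conv_lhs => rw [← hrq]
        exact pnt_rnk hc hq
      rw [e1, e2]
    · have hij' : i = rnk S t p + 1 ∨ rnk S t p + 1 < i := by omega
      rcases hij' with hij' | hij'
      · -- i = j+1 : new point is p
        have hsw : sw (rnk S t p) i = rnk S t p := by unfold sw; split_ifs <;> omega
        rw [hsw, hij']
        have e1 : pnt S (t+1) (rnk S t p + 1) = p := by
          conv_lhs => rw [← h'p]
          exact pnt_rnk hc hp
        have e2 : pnt S t (rnk S t p) = p := pnt_rnk hc hp
        rw [e1, e2]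
      · have hsw : sw (rnk S t p) i = i := by unfold sw; split_ifs <;> omega
        rw [hsw]
        obtain ⟨hxS, hxr⟩ := pnt_spec hc hi (t := t)
        set x := pnt S t i
        have hxp : x ≠ p := fun h => by rw [h] at hxr; omega
        have hxq : x ≠ q := fun h => by rw [h] at hxr; omega
        have : rnk S (t+1) x = i := by rw [h'r x hxS hxp hxq]; exact hxr
        rw [← this, pnt_rnk hc hxS]
  · have hsw : sw (rnk S t p) i = i := by
      unfold sw
      split_ifs <;> omega
    rw [hsw, pnt_big hi, pnt_big hi]

lemma ltt_zero {S : Finset (ℝ × ℝ)} {p q : ℝ × ℝ} : ltt S 0 p q ↔ p.1 < q.1 := by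
  unfold ltt proc
  constructor
  · rintro (⟨h, _⟩ | ⟨_, h⟩)
    · exact h
    · omega
  · intro h
    exact Or.inl ⟨h, by omega⟩

lemma ltt_final {S : Finset (ℝ × ℝ)} {p q : ℝ × ℝ} (hp : p ∈ S) (hq : q ∈ S) :
    ltt S (RT S) p q ↔ q.1 < p.1 := by
  unfold ltt
  constructor
  · rintro (⟨h, hnp⟩ | ⟨h, _⟩)
    · exact absurd (idx_lt (mem_prs.mpr ⟨hp, hq, h⟩)) hnp
    · exact h
  · intro h
    exact Or.inr ⟨h, idx_lt (mem_prs.mpr ⟨hq, hp, h⟩)⟩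

lemma rnk_rev {S : Finset (ℝ × ℝ)} (hc : Ctx S) {p : ℝ × ℝ} (hp : p ∈ S) :
    rnk S (RT S) p + rnk S 0 p + 1 = S.card := by
  have h0 : rnk S 0 p = (S.filter (fun q => q.1 < p.1)).card := by
    unfold rnk
    congr 1
    exact Finset.filter_congr (fun q _ => by rw [ltt_zero])
  have hT : rnk S (RT S) p = (S.filter (fun q => p.1 < q.1)).card := by
    unfold rnk
    congr 1
    refine Finset.filter_congr (fun q hq => ?_)
    rw [ltt_final hq hp]
  have hunion : S.filter (fun q => q.1 < p.1) ∪ S.filter (fun q => p.1 < q.1) = S.erase p := by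
    ext r
    rw [Finset.mem_union, Finset.mem_filter, Finset.mem_filter, Finset.mem_erase]
    constructor
    · rintro (⟨hr, h⟩ | ⟨hr, h⟩) <;>
      exact ⟨fun hh => by rw [hh] at h; exact lt_irrefl _ h, hr⟩
    · rintro ⟨hne, hr⟩
      rcases (hc.hx r hr p hp hne).lt_or_gt with h | h
      · exact Or.inl ⟨hr, h⟩
      · exact Or.inr ⟨hr, h⟩
  have hdisj : Disjoint (S.filter (fun q => q.1 < p.1)) (S.filter (fun q => p.1 < q.1)) := by
    rw [Finset.disjoint_left]
    intro a ha hb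
    rw [Finset.mem_filter] at ha hb
    linarith [ha.2, hb.2]
  have hcards := Finset.card_union_of_disjoint hdisj
  rw [hunion, Finset.card_erase_of_mem hp] at hcards
  have hpos : 1 ≤ S.card := Finset.card_pos.mpr ⟨p, hp⟩
  omega

lemma pnt_rev {S : Finset (ℝ × ℝ)} (hc : Ctx S) {j : ℕ} (hj : j < S.card) :
    pnt S (RT S) j = pnt S 0 (S.card - 1 - j) := by
  obtain ⟨hxS, hxr⟩ := pnt_spec hc hj (t := RT S)
  set x := pnt S (RT S) j with hx
  have hrev := rnk_rev hc hxS
  have : rnk S 0 x = S.card - 1 - j := by omega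
  rw [← this, pnt_rnk hc hxS]

lemma count_bij {S : Finset (ℝ × ℝ)} (hc : Ctx S) (color : ℝ × ℝ → Fin 3)
    (t k m : ℕ) (hkm : k + m ≤ S.card) (c : Fin 3) :
    ((Finset.Ico k (k+m)).filter (fun j => color (pnt S t j) = c)).card
      = (S.filter (fun p => color p = c ∧ k ≤ rnk S t p ∧ rnk S t p < k + m)).card := by
  refine Finset.card_bij' (fun j _ => pnt S t j) (fun p _ => rnk S t p) ?_ ?_ ?_ ?_
  · intro j hj
    rw [Finset.mem_filter, Finset.mem_Ico] at hj
    obtain ⟨⟨h1, h2⟩, h3⟩ := hj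
    obtain ⟨hS, hr⟩ := pnt_spec hc (show j < S.card by omega) (t := t)
    simp only [Finset.mem_filter]
    exact ⟨hS, h3, by omega, by omega⟩
  · intro p hp
    rw [Finset.mem_filter] at hp
    simp only [Finset.mem_filter, Finset.mem_Ico]
    refine ⟨⟨hp.2.2.1, hp.2.2.2⟩, ?_⟩
    rw [pnt_rnk hc hp.1]
    exact hp.2.1
  · intro j hj
    rw [Finset.mem_filter, Finset.mem_Ico] at hj
    show rnk S t (pnt S t j) = j
    exact (pnt_spec hc (show j < S.card by omega) (t := t)).2
  · intro p hp
    rw [Finset.mem_filter] at hp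
    show pnt S t (rnk S t p) = p
    exact pnt_rnk hc hp.1

lemma prc_canon {S : Finset (ℝ × ℝ)} {t : ℕ} {a b : ℝ × ℝ} (h : a.1 < b.1) :
    prc S t a b ↔ proc S t (a, b) := by
  unfold prc
  rw [if_pos h]

lemma vld_to_vldp {S : Finset (ℝ × ℝ)} {t : ℕ} {μ : ℝ} {u v : ℝ × ℝ} (huv : u.1 ≠ v.1)
    (h : (u.1 < v.1 → vld S t μ (u, v)) ∧ (v.1 < u.1 → vld S t μ (v, u))) :
    vldp S t μ u v := by
  unfold vldp
  rcases huv.lt_or_gt with hlt | hlt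
  · rw [prc_canon hlt]
    exact h.1 hlt
  · have h2 := h.2 hlt
    unfold prc
    rw [if_neg (by linarith), slp_comm u v]
    exact h2

lemma prc_comm {S : Finset (ℝ × ℝ)} {t : ℕ} {a b : ℝ × ℝ} (h : a.1 ≠ b.1) :
    prc S t a b ↔ prc S t b a := by
  unfold prc
  rcases h.lt_or_gt with h' | h'
  · rw [if_pos h', if_neg (by linarith)]
  · rw [if_neg (by linarith), if_pos h']

lemma cut_exists {S : Finset (ℝ × ℝ)} (hc : Ctx S) (t K : ℕ) (avoid : Finset ℝ) :
    ∃ a c : ℝ, a ∉ avoid ∧ ∀ p ∈ S, (key a p < c ↔ rnk S t p < K) ∧ key a p ≠ c := by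
  classical
  set E := (prs S).filter (fun e => ¬ ((rnk S t e.1 < K) ↔ (rnk S t e.2 < K))) with hE
  have hdist : ∀ e ∈ E, ∀ f ∈ E, proc S t e → ¬ proc S t f → slp e.1 e.2 < slp f.1 f.2 := by
    intro e heE f hfE hpe hnf
    rw [hE, Finset.mem_filter] at heE hfE
    obtain ⟨heprs, hecross⟩ := heE
    obtain ⟨hfprs, hfcross⟩ := hfE
    by_cases hne : slp e.1 e.2 = slp f.1 f.2
    swap
    · exact proc_slope_lt heprs hfprs hne hpe hnf
    · exfalso
      obtain ⟨he1, he2, he3⟩ := mem_prs.mp heprs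
      obtain ⟨hf1, hf2, hf3⟩ := mem_prs.mp hfprs
      set lam := slp e.1 e.2 with hlam
      have ke : key lam e.1 = key lam e.2 := (key_eq_iff (ne_of_lt he3) lam).mpr rfl
      have kf : key lam f.1 = key lam f.2 := (key_eq_iff (ne_of_lt hf3) lam).mpr hne
      have hee : e.1 ≠ e.2 := fun h => (ne_of_lt he3) (congrArg Prod.fst h)
      have hff : f.1 ≠ f.2 := fun h => (ne_of_lt hf3) (congrArg Prod.fst h)
      have hef : e ≠ f := fun h => hnf (h ▸ hpe)
      have h11 : e.1 ≠ f.1 := by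
        intro h
        apply hef
        apply pkey_injOn hc heprs hfprs
        unfold pkey
        rw [← hlam, ← hne, ← h]
      have h21 : e.2 ≠ f.1 := by
        intro h
        have k2 : key lam e.1 = key lam f.2 := by rw [ke, h, kf]
        have d1 : e.1 ≠ f.2 := by
          intro hh
          have hh1 : e.1.1 = f.2.1 := congrArg Prod.fst hh
          have hh2 : e.2.1 = f.1.1 := congrArg Prod.fst h
          linarith [he3, hf3]
        exact hc.no_tie he1 he2 hf2 hee d1 (by rw [h]; exact hff) ke k2
      have h12 : e.1 ≠ f.2 := by
        intro h
        have k2 : key lam e.1 = key lam f.1 := by rw [h, ← kf]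
        exact hc.no_tie he1 he2 hf1 hee h11 h21 ke k2
      have h22 : e.2 ≠ f.2 := by
        intro h
        have k2 : key lam e.1 = key lam f.1 := by rw [ke, h, kf]
        exact hc.no_tie he1 he2 hf1 hee h11 h21 ke k2
      have hprcE : prc S t e.1 e.2 := (prc_canon he3).mpr hpe
      have hprcF : ¬ prc S t f.1 f.2 := fun h => hnf ((prc_canon hf3).mp h)
      have hsl_e : lam = slp e.1 e.2 := hlam
      have hsl_f : lam = slp f.1 f.2 := hne
      -- generic step : prefix point u, suffix point w, slope (u,w) ≠ lam
      have step : ∀ u w : ℝ × ℝ, u ∈ S → w ∈ S → u ≠ w → slp u w ≠ lam →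
          rnk S t u < K → ¬ rnk S t w < K → key lam u < key lam w := by
        intro u w hu hw huw hsne hruK hrwK
        have hxuw := hc.hx u hu w hw huw
        have hvld : vldp S t lam u w := by
          constructor
          · intro hprc
            rw [hsl_f]
            exact prc_compat hu hw hf1 hf2 hxuw (ne_of_lt hf3)
              (by rw [← hsl_f]; exact hsne) hprc hprcF
          · intro hprc
            rw [hsl_e]
            exact prc_compat he1 he2 hu hw (ne_of_lt he3) hxuw
              (by rw [← hsl_e]; exact fun hh => hsne hh.symm) hprcE hprc
        have hltt : ltt S t u w := (rnk_lt_iff hc hu hw huw).mpr (by omega)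
        exact (ltt_iff_key_lt hc hu hw huw hvld).mp hltt
      -- orientation case analysis
      have main : ∀ xe ye xf yf : ℝ × ℝ, xe ∈ S → ye ∈ S → xf ∈ S → yf ∈ S →
          xe ≠ ye → xf ≠ yf → xe ≠ xf → xe ≠ yf → ye ≠ xf → ye ≠ yf →
          key lam xe = key lam ye → key lam xf = key lam yf →
          rnk S t xe < K → ¬ rnk S t ye < K → rnk S t xf < K → ¬ rnk S t yf < K →
          False := by
        intro xe ye xf yf hxeS hyeS hxfS hyfS hexy hfxy d1 d2 d3 d4 kxe kxf
          rxe rye rxf ryf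
        have s1 : slp xe yf ≠ lam := by
          intro h
          have : key lam xe = key lam yf :=
            (key_eq_iff (hc.hx xe hxeS yf hyfS d2) lam).mpr h.symm
          exact hc.no_tie hxeS hyeS hyfS hexy d2 d4 kxe this
        have s2 : slp xf ye ≠ lam := by
          intro h
          have : key lam xf = key lam ye :=
            (key_eq_iff (hc.hx xf hxfS ye hyeS (Ne.symm d3)) lam).mpr h.symm
          exact hc.no_tie hxfS hyfS hyeS hfxy (Ne.symm d3) (Ne.symm d4) kxf this
        have k1 : key lam xe < key lam yf := step xe yf hxeS hyfS d2 s1 rxe ryf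
        have k2 : key lam xf < key lam ye := step xf ye hxfS hyeS (Ne.symm d3) s2 rxf rye
        rw [kxe] at k1
        rw [kxf] at k2
        linarith
      by_cases hcE : rnk S t e.1 < K <;> by_cases hcF : rnk S t f.1 < K
      · exact main e.1 e.2 f.1 f.2 he1 he2 hf1 hf2 hee hff h11 h12 h21 h22 ke kf
          hcE (by tauto) hcF (by tauto)
      · exact main e.1 e.2 f.2 f.1 he1 he2 hf2 hf1 hee (Ne.symm hff) h12 h11 h22 h21
          ke kf.symm hcE (by tauto) (by tauto) hcF
      · exact main e.2 e.1 f.1 f.2 he2 he1 hf1 hf2 (Ne.symm hee) hff h21 h22 h11 h12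
          ke.symm kf (by tauto) hcE hcF (by tauto)
      · exact main e.2 e.1 f.2 f.1 he2 he1 hf2 hf1 (Ne.symm hee) (Ne.symm hff) h22 h21
          h12 h11 ke.symm kf.symm (by tauto) hcE (by tauto) hcF
  obtain ⟨a, hav, hvalid⟩ := exists_valid t E hdist avoid
  have hsep : ∀ u ∈ S, ∀ v ∈ S, rnk S t u < K → ¬ rnk S t v < K → key a u < key a v := by
    intro u hu v hv hru hrv
    have hne : u ≠ v := fun h => hrv (h ▸ hru)
    have hxuv := hc.hx u hu v hv hne
    have hvld : vldp S t a u v := by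
      apply vld_to_vldp hxuv
      constructor
      · intro hlt
        refine hvalid (u, v) ?_
        rw [hE, Finset.mem_filter]
        exact ⟨mem_prs.mpr ⟨hu, hv, hlt⟩, by simp only; tauto⟩
      · intro hlt
        refine hvalid (v, u) ?_
        rw [hE, Finset.mem_filter]
        exact ⟨mem_prs.mpr ⟨hv, hu, hlt⟩, by simp only; tauto⟩
    have hltt : ltt S t u v := (rnk_lt_iff hc hu hv hne).mpr (by omega)
    exact (ltt_iff_key_lt hc hu hv hne hvld).mp hltt
  have hAB : ∀ x ∈ (S.filter (fun p => rnk S t p < K)).image (key a),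
      ∀ y ∈ (S.filter (fun p => ¬ rnk S t p < K)).image (key a), x < y := by
    intro x hx y hy
    obtain ⟨u, hu, rfl⟩ := Finset.mem_image.mp hx
    obtain ⟨v, hv, rfl⟩ := Finset.mem_image.mp hy
    rw [Finset.mem_filter] at hu hv
    exact hsep u hu.1 v hv.1 hu.2 hv.2
  obtain ⟨c, hcav, hcA, hcB⟩ := exists_between _ _ (S.image (key a)) hAB
  refine ⟨a, c, hav, ?_⟩
  intro p hp
  refine ⟨⟨?_, ?_⟩, ?_⟩
  · intro hkc
    by_contra hK
    have := hcB _ (Finset.mem_image_of_mem _ (Finset.mem_filter.mpr ⟨hp, hK⟩))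
    linarith
  · intro hK
    exact hcA _ (Finset.mem_image_of_mem _ (Finset.mem_filter.mpr ⟨hp, hK⟩))
  · intro heq
    exact hcav (Finset.mem_image.mpr ⟨p, hp, heq⟩)

end
end DW

/-- **A double wedge containing exactly `n` points of each color.**
For a set of `6n` points in the plane with exactly `2n` points of each of the
three colors (`Fin 3`: 0 = red, 1 = green, 2 = blue), in general position
(no three collinear) with pairwise distinct x- and y-coordinates, there is a
double wedge `{(x,y) | (y - m₁x - c₁)(y - m₂x - c₂) < 0}` (with `m₁ ≠ m₂`)
containing exactly `n` points of each color. -/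
theorem stmt_6 (n : ℕ) (hn : 1 ≤ n)
    (S : Finset (ℝ × ℝ))
    (color : ℝ × ℝ → Fin 3)
    (hbal : ∀ i : Fin 3, (S.filter (fun p => color p = i)).card = 2 * n)
    (hgen : ∀ p ∈ S, ∀ q ∈ S, ∀ r ∈ S, p ≠ q → p ≠ r → q ≠ r →
      ¬ Collinear ℝ ({p, q, r} : Set (ℝ × ℝ)))
    (hx : ∀ p ∈ S, ∀ q ∈ S, p ≠ q → p.1 ≠ q.1)
    (hy : ∀ p ∈ S, ∀ q ∈ S, p ≠ q → p.2 ≠ q.2) :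
    ∃ m₁ c₁ m₂ c₂ : ℝ, m₁ ≠ m₂ ∧ ∀ i : Fin 3,
      {p : ℝ × ℝ | p ∈ S ∧ color p = i ∧
        (p.2 - m₁ * p.1 - c₁) * (p.2 - m₂ * p.1 - c₂) < 0}.ncard = n := by
  classical
  have hc : DW.Ctx S := ⟨hgen, hx⟩
  have hcard : S.card = 6 * n := by
    have h := Finset.card_eq_sum_card_fiberwise
      (f := color) (s := S) (t := Finset.univ) (fun p _ => Finset.mem_univ _)
    rw [Fin.sum_univ_three] at h
    rw [h, hbal 0, hbal 1, hbal 2]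
    ring
  have hb : ∀ t, t ≤ DW.RT S → DW.bal n (fun j => color (DW.pnt S t j)) := by
    intro t _ c
    have hcb := DW.count_bij hc color t 0 (6*n) (by omega) c
    have hIco : Finset.Ico 0 (0 + 6*n) = Finset.range (6*n) := by
      rw [Finset.range_eq_Ico, Nat.zero_add]
    rw [hIco] at hcb
    have hfe : S.filter (fun p => color p = c ∧ 0 ≤ DW.rnk S t p ∧ DW.rnk S t p < 0 + 6*n)
        = S.filter (fun p => color p = c) := by
      apply Finset.filter_congr
      intro p hp
      have := DW.rnk_lt_card (t := t) hp
      constructor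
      · tauto
      · intro h
        exact ⟨h, by omega, by omega⟩
    rw [hfe, hbal c] at hcb
    exact hcb
  have hstep : ∀ t, t < DW.RT S →
      ∃ j, j + 1 < 6*n ∧ ∀ i, color (DW.pnt S (t+1) i) = color (DW.pnt S t (DW.sw j i)) := by
    intro t ht
    obtain ⟨j, hj, hpnt⟩ := DW.swap_step hc ht
    exact ⟨j, by omega, fun i => congrArg color (hpnt i)⟩
  have hrev : ∀ j, j < 6*n →
      color (DW.pnt S (DW.RT S) j) = color (DW.pnt S 0 (6*n - 1 - j)) := by
    intro j hj
    have h := DW.pnt_rev hc (j := j) (by omega)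
    rw [h, hcard]
  obtain ⟨t, ht, k, hk, hcount⟩ := DW.combi (n := n) (DW.RT S) hn
    (fun t j => color (DW.pnt S t j)) hb hstep hrev
  obtain ⟨a₁, c₁, _, hcut1⟩ := DW.cut_exists hc t k ∅
  obtain ⟨a₂, c₂, ha₂, hcut2⟩ := DW.cut_exists hc t (k + 3*n) {a₁}
  refine ⟨a₁, c₁, a₂, c₂, fun h => ha₂ (Finset.mem_singleton.mpr h.symm), ?_⟩
  intro i
  have hset : {p : ℝ × ℝ | p ∈ S ∧ color p = i ∧
      (p.2 - a₁ * p.1 - c₁) * (p.2 - a₂ * p.1 - c₂) < 0}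
      = ↑(S.filter (fun p => color p = i ∧ k ≤ DW.rnk S t p ∧ DW.rnk S t p < k + 3*n)) := by
    ext p
    simp only [Set.mem_setOf_eq, Finset.coe_filter, Set.mem_setOf_eq]
    constructor
    · rintro ⟨hpS, hci, hprod⟩
      obtain ⟨h1iff, h1ne⟩ := hcut1 p hpS
      obtain ⟨h2iff, h2ne⟩ := hcut2 p hpS
      have hprod' : (DW.key a₁ p - c₁) * (DW.key a₂ p - c₂) < 0 := hprod
      rcases mul_neg_iff.mp hprod' with ⟨hpos, hneg⟩ | ⟨hneg, hpos⟩
      · have h1 : ¬ DW.key a₁ p < c₁ := by linarith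
        have h2 : DW.key a₂ p < c₂ := by linarith
        have hr1 : ¬ DW.rnk S t p < k := fun h => h1 (h1iff.mpr h)
        have hr2 : DW.rnk S t p < k + 3*n := h2iff.mp h2
        exact ⟨hpS, hci, by omega, hr2⟩
      · have h1 : DW.key a₁ p < c₁ := by linarith
        have h2 : ¬ DW.key a₂ p < c₂ := by linarith
        have hr1 : DW.rnk S t p < k := h1iff.mp h1
        have hr2 : ¬ DW.rnk S t p < k + 3*n := fun h => h2 (h2iff.mpr h)
        omega
    · rintro ⟨hpS, hci, hk1, hk2⟩
      obtain ⟨h1iff, h1ne⟩ := hcut1 p hpS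
      obtain ⟨h2iff, h2ne⟩ := hcut2 p hpS
      refine ⟨hpS, hci, ?_⟩
      have h1 : ¬ DW.key a₁ p < c₁ := fun h => by
        have := h1iff.mp h
        omega
      have h1' : c₁ < DW.key a₁ p := by
        rcases lt_trichotomy (DW.key a₁ p) c₁ with h | h | h
        · exact absurd h h1
        · exact absurd h h1ne
        · exact h
      have h2 : DW.key a₂ p < c₂ := h2iff.mpr hk2
      show (DW.key a₁ p - c₁) * (DW.key a₂ p - c₂) < 0
      exact mul_neg_of_pos_of_neg (by linarith) (by linarith)
  rw [hset, Set.ncard_coe_finset]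
  have hcb := DW.count_bij hc color t k (3*n) (by omega) i
  have hcnt : DW.cnt n (fun j => color (DW.pnt S t j)) k i
      = ((Finset.Ico k (k + 3*n)).filter (fun j => color (DW.pnt S t j) = i)).card := rfl
  have := hcount i
  rw [hcnt, hcb] at this
  exact this
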